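/- Let H be a real Hilbert space, let L : H → H be a continuous self-adjoint linear operator, and let u : ℝ → H be a differentiable curve satisfying u'(t) = L(u(t)) for all t ∈ ℝ. Then for every t ∈ ℝ and every h ≥ 0, ‖u(t)‖⁴ ≤ ‖u(t-h)‖² · ‖u(t+h)‖². -/

import Mathlib

open scoped RealInnerProductSpace

/-- Log-convexity of the energy `t ↦ ‖u t‖²` for solutions of the linear equation
`u' = L u` with `L` continuous self-adjoint on a real Hilbert space (key inequality in
the proof of Lemma 4.8). -/
theorem stmt_5 {H : Type*} [NormedAddCommGroup H] [InnerProductSpace ℝ H] [CompleteSpace H]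
    (L : H →L[ℝ] H) (hL : ∀ x y : H, ⟪L x, y⟫ = ⟪x, L y⟫)
    (u : ℝ → H) (hu : ∀ t : ℝ, HasDerivAt u (L (u t)) t) :
    ∀ t h : ℝ, 0 ≤ h → ‖u t‖ ^ 4 ≤ ‖u (t - h)‖ ^ 2 * ‖u (t + h)‖ ^ 2 := by
  intro t h _
  set φ : ℝ → ℝ := fun s => ⟪u (t - s), u (t + s)⟫ with hφdef
  have hφ : ∀ s : ℝ, HasDerivAt φ 0 s := by
    intro s
    have h1 : HasDerivAt (fun s : ℝ => u (t - s)) (-(L (u (t - s)))) s := by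
      have ha : HasDerivAt (fun s : ℝ => t - s) (-1) s := by
        simpa using (hasDerivAt_id s).const_sub t
      have := HasDerivAt.scomp s (hu (t - s)) ha
      simpa [Function.comp_def] using this
    have h2 : HasDerivAt (fun s : ℝ => u (t + s)) (L (u (t + s))) s := by
      have ha : HasDerivAt (fun s : ℝ => t + s) 1 s := by
        simpa using (hasDerivAt_id s).const_add t
      have := HasDerivAt.scomp s (hu (t + s)) ha
      simpa [Function.comp_def] using this
    have := (HasDerivAt.inner ℝ h1 h2 :)
    have key : ⟪u (t - s), L (u (t + s))⟫ + ⟪-(L (u (t - s))), u (t + s)⟫ = 0 := by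
      rw [inner_neg_left, ← hL]; ring
    rw [key] at this
    exact this
  have hconst : φ h = φ 0 := by
    have : ∀ s, deriv φ s = 0 := fun s => (hφ s).deriv
    have hd : Differentiable ℝ φ := fun s => (hφ s).differentiableAt
    exact is_const_of_deriv_eq_zero hd this h 0
  have h0 : φ 0 = ‖u t‖ ^ 2 := by
    simp [hφdef, real_inner_self_eq_norm_sq]
  have hcs : φ h ≤ ‖u (t - h)‖ * ‖u (t + h)‖ := real_inner_le_norm _ _
  have hnn : (0:ℝ) ≤ ‖u t‖ ^ 2 := by positivity
  calc ‖u t‖ ^ 4 = (‖u t‖ ^ 2) ^ 2 := by ring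
    _ = (φ h) ^ 2 := by rw [hconst, h0]
    _ ≤ (‖u (t - h)‖ * ‖u (t + h)‖) ^ 2 := by
        apply pow_le_pow_left₀ _ hcs
        rw [hconst, h0]; exact hnn
    _ = ‖u (t - h)‖ ^ 2 * ‖u (t + h)‖ ^ 2 := by ring
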